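/- For positive integers k and n with n > max(k, 2), the counts satisfy the recurrence a_{k,n} = a_{k,n-1} + a_{k-1,n-2}. -/

import Mathlib

/-- `a k n` counts subsets of `{1,...,n}` that are empty or satisfy `ω_k(E) < min E`. -/
noncomputable def a (k n : ℕ) : ℕ :=
  {E : Finset ℕ | E ⊆ Finset.Icc 1 n ∧
    (E = ∅ ∨ ∃ h : E.Nonempty, (E.erase k).card < E.min' h)}.ncard

open Classical in
noncomputable def S (k n : ℕ) : Finset (Finset ℕ) :=
  (Finset.Icc 1 n).powerset.filter
    (fun E => E = ∅ ∨ ∃ h : E.Nonempty, (E.erase k).card < E.min' h)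

lemma mem_S {k n : ℕ} {E : Finset ℕ} :
    E ∈ S k n ↔ E ⊆ Finset.Icc 1 n ∧
      (E = ∅ ∨ ∃ h : E.Nonempty, (E.erase k).card < E.min' h) := by
  simp [S, Finset.mem_filter, Finset.mem_powerset]

lemma a_eq (k n : ℕ) : a k n = (S k n).card := by
  rw [← Set.ncard_coe_finset]
  unfold a
  congr 1
  ext E
  simp [mem_S]

theorem stmt2 (k n : ℕ) (hk : 1 ≤ k) (hn : n > max k 2) :
    a k n = a k (n - 1) + a (k - 1) (n - 2) := by
  classical
  have hkn : k < n := lt_of_le_of_lt (le_max_left _ _) hn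
  have h2n : 2 < n := lt_of_le_of_lt (le_max_right _ _) hn
  rw [a_eq, a_eq, a_eq]
  rw [← Finset.card_filter_add_card_filter_not (p := fun E => n ∈ E) (s := S k n),
    Nat.add_comm]
  congr 1
  · -- n ∉ E part
    congr 1
    ext E
    simp only [Finset.mem_filter, mem_S]
    constructor
    · rintro ⟨⟨hsub, hP⟩, hnE⟩
      refine ⟨fun x hx => ?_, hP⟩
      have := hsub hx
      simp only [Finset.mem_Icc] at this ⊢
      have : x ≠ n := fun h => hnE (h ▸ hx)
      have := hsub hx
      simp only [Finset.mem_Icc] at this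
      omega
    · rintro ⟨hsub, hP⟩
      refine ⟨⟨fun x hx => ?_, hP⟩, fun hnE => ?_⟩
      · have := hsub hx; simp only [Finset.mem_Icc] at this ⊢; omega
      · have := hsub hnE; simp only [Finset.mem_Icc] at this; omega
  · -- n ∈ E part: bijection with S (k-1) (n-2)
    -- key : every member E of the filtered set has all elements ≥ 2
    have key : ∀ E : Finset ℕ, E ∈ (S k n).filter (fun E => n ∈ E) →
        (∀ x ∈ E, 2 ≤ x ∧ x ≤ n) ∧ ∃ h : E.Nonempty, (E.erase k).card < E.min' h := by
      intro E hE
      rw [Finset.mem_filter, mem_S] at hE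
      obtain ⟨⟨hsub, hP⟩, hnE⟩ := hE
      have hne : E.Nonempty := ⟨n, hnE⟩
      rcases hP with h0 | ⟨h, hlt⟩
      · exact absurd h0 (Finset.nonempty_iff_ne_empty.mp hne)
      · have hcard : 1 ≤ (E.erase k).card := by
          have : n ∈ E.erase k := Finset.mem_erase.mpr ⟨by omega, hnE⟩
          exact Finset.card_pos.mpr ⟨n, this⟩
        have hmin : 2 ≤ E.min' h := by omega
        refine ⟨fun x hx => ?_, h, hlt⟩
        have h1 := hsub hx
        simp only [Finset.mem_Icc] at h1
        exact ⟨le_trans hmin (Finset.min'_le _ _ hx), h1.2⟩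
    refine Finset.card_bij' (fun E _ => (E.erase n).image (· - 1))
      (fun F _ => insert n (F.image (· + 1))) ?_ ?_ ?_ ?_
    · -- forward: image lands in S (k-1) (n-2)
      intro E hE
      obtain ⟨hbound, hne, hlt⟩ := key E hE
      rw [Finset.mem_filter, mem_S] at hE
      obtain ⟨⟨hsub, _⟩, hnE⟩ := hE
      rw [mem_S]
      constructor
      · intro y hy
        simp only [Finset.mem_image, Finset.mem_erase] at hy
        obtain ⟨x, ⟨hxn, hxE⟩, rfl⟩ := hy
        have := hbound x hxE
        simp only [Finset.mem_Icc]
        omega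
      · by_cases hEn : E.erase n = ∅
        · left
          rw [hEn, Finset.image_empty]
        · right
          have hne' : (E.erase n).Nonempty := Finset.nonempty_iff_ne_empty.mpr hEn
          have hFne : ((E.erase n).image (· - 1)).Nonempty := hne'.image _
          refine ⟨hFne, ?_⟩
          have hmono : Monotone (· - 1 : ℕ → ℕ) := fun x y h => Nat.sub_le_sub_right h 1
          have hminim : ((E.erase n).image (· - 1)).min' hFne = (E.erase n).min' hne' - 1 :=
            Finset.min'_image hmono _ _
          -- min' (E.erase n) = min' E
          have hminE : (E.erase n).min' hne' = E.min' hne := by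
            apply le_antisymm
            · apply Finset.min'_le
              refine Finset.mem_erase.mpr ⟨?_, Finset.min'_mem _ _⟩
              obtain ⟨y, hy⟩ := hne'
              have hyE := (Finset.mem_erase.mp hy)
              have h1 : E.min' hne ≤ y := Finset.min'_le _ _ hyE.2
              have h2 := (hbound y hyE.2).2
              intro hc
              have : y < n := lt_of_le_of_ne h2 hyE.1
              omega
            · exact Finset.min'_le _ _ (Finset.mem_of_mem_erase (Finset.min'_mem _ _))
          -- injectivity of (· - 1) on E.erase n
          have hinj : Set.InjOn (· - 1) (E.erase n : Set ℕ) := by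
            intro x hx y hy hxy
            have hx' : x ∈ E.erase n := hx
            have hy' : y ∈ E.erase n := hy
            have h1 := (hbound x (Finset.mem_of_mem_erase hx')).1
            have h2 := (hbound y (Finset.mem_of_mem_erase hy')).1
            have h3 : x - 1 = y - 1 := hxy
            omega
          -- erase commutes with the image at k ↦ k-1
          have himg : ((E.erase n).image (· - 1)).erase (k - 1)
              = ((E.erase n).erase k).image (· - 1) := by
            ext y
            simp only [Finset.mem_erase, Finset.mem_image]
            constructor
            · rintro ⟨hyk, x, ⟨hxn, hxE⟩, rfl⟩
              have hb := hbound x hxE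
              exact ⟨x, ⟨by omega, hxn, hxE⟩, rfl⟩
            · rintro ⟨x, ⟨hxk, hxn, hxE⟩, rfl⟩
              have hb := hbound x hxE
              exact ⟨by omega, x, ⟨hxn, hxE⟩, rfl⟩
          have hcard2 : (((E.erase n).erase k).image (· - 1)).card
              = ((E.erase n).erase k).card := by
            apply Finset.card_image_of_injOn
            exact hinj.mono (by intro x hx; exact Finset.mem_coe.mpr (Finset.mem_of_mem_erase hx))
          rw [hminim, hminE, himg, hcard2]
          -- card ((E.erase n).erase k) = card (E.erase k) - 1
          have hcomm : (E.erase n).erase k = (E.erase k).erase n := Finset.erase_right_comm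
          have hnk : n ∈ E.erase k := Finset.mem_erase.mpr ⟨by omega, hnE⟩
          have : ((E.erase k).erase n).card = (E.erase k).card - 1 :=
            Finset.card_erase_of_mem hnk
          have hc1 : 1 ≤ (E.erase k).card := Finset.card_pos.mpr ⟨n, hnk⟩
          have hm2 : 2 ≤ E.min' hne := by omega
          rw [hcomm, this]
          omega
    · -- backward: insert lands in the filtered set
      intro F hF
      rw [mem_S] at hF
      obtain ⟨hsub, hP⟩ := hF
      have hb : ∀ x ∈ F, 1 ≤ x ∧ x ≤ n - 2 := by
        intro x hx
        have := hsub hx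
        simpa [Finset.mem_Icc] using this
      have hnI : n ∉ F.image (· + 1) := by
        simp only [Finset.mem_image]
        rintro ⟨x, hx, hxn⟩
        have := hb x hx
        omega
      rw [Finset.mem_filter, mem_S]
      refine ⟨⟨?_, ?_⟩, Finset.mem_insert_self _ _⟩
      · intro y hy
        rcases Finset.mem_insert.mp hy with rfl | hy
        · simp only [Finset.mem_Icc]; omega
        · simp only [Finset.mem_image] at hy
          obtain ⟨x, hx, rfl⟩ := hy
          have := hb x hx
          simp only [Finset.mem_Icc]; omega
      · right
        have hEne : (insert n (F.image (· + 1))).Nonempty := ⟨n, Finset.mem_insert_self _ _⟩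
        refine ⟨hEne, ?_⟩
        rcases hP with rfl | ⟨hFne, hlt⟩
        · -- F = ∅, E = {n}
          have e1 : insert n (Finset.image (· + 1) (∅ : Finset ℕ)) = {n} := by simp
          simp only [e1]
          rw [Finset.erase_eq_of_notMem (by simp only [Finset.mem_singleton]; omega)]
          simp only [Finset.card_singleton, Finset.min'_singleton]
          omega
        · have hIne : (F.image (· + 1)).Nonempty := hFne.image _
          have hmono : Monotone (· + 1 : ℕ → ℕ) := fun x y h => Nat.add_le_add_right h 1
          have hminI : (F.image (· + 1)).min' hIne = F.min' hFne + 1 :=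
            Finset.min'_image hmono _ _
          have hminE : (insert n (F.image (· + 1))).min' hEne = F.min' hFne + 1 := by
            apply le_antisymm
            · apply Finset.min'_le
              exact Finset.mem_insert_of_mem (hminI ▸ Finset.min'_mem _ hIne)
            · apply Finset.le_min'
              intro y hy
              rcases Finset.mem_insert.mp hy with rfl | hy
              · have := hb _ (Finset.min'_mem F hFne)
                omega
              · rw [← hminI]
                exact Finset.min'_le _ _ hy
          rw [hminE]
          -- card of erase k
          have hcardE : (insert n (F.image (· + 1))).card = F.card + 1 := by
            rw [Finset.card_insert_of_notMem hnI, Finset.card_image_of_injOn]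
            intro x _ y _ h
            have h' : x + 1 = y + 1 := h
            omega
          have hkE : k ∈ insert n (F.image (· + 1)) ↔ k - 1 ∈ F := by
            simp only [Finset.mem_insert, Finset.mem_image]
            constructor
            · rintro (rfl | ⟨x, hx, rfl⟩)
              · omega
              · simpa using hx
            · intro h
              right
              refine ⟨k - 1, h, ?_⟩
              have := hb _ h
              omega
          have hcardF : (F.erase (k - 1)).card < F.min' hFne := hlt
          by_cases hkF : k - 1 ∈ F
          · have h1 : k ∈ insert n (F.image (· + 1)) := hkE.mpr hkF
            have h2 : ((insert n (F.image (· + 1))).erase k).card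
                = F.card + 1 - 1 := by
              rw [Finset.card_erase_of_mem h1, hcardE]
            have h3 : (F.erase (k - 1)).card = F.card - 1 :=
              Finset.card_erase_of_mem hkF
            have h4 : 1 ≤ F.card := Finset.card_pos.mpr ⟨_, hkF⟩
            omega
          · have h1 : k ∉ insert n (F.image (· + 1)) := fun h => hkF (hkE.mp h)
            rw [Finset.erase_eq_of_notMem h1, hcardE]
            rw [Finset.erase_eq_of_notMem hkF] at hcardF
            omega
    · -- left inverse
      intro E hE
      obtain ⟨hbound, -⟩ := key E hE
      rw [Finset.mem_filter] at hE
      have hnE : n ∈ E := hE.2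
      rw [Finset.image_image]
      have : ((E.erase n).image ((· + 1) ∘ (· - 1))) = E.erase n := by
        rw [Finset.image_congr (g := id), Finset.image_id]
        intro x hx
        have := hbound x (Finset.mem_of_mem_erase hx)
        simp only [Function.comp_apply, id_eq]
        omega
      rw [this, Finset.insert_erase hnE]
    · -- right inverse
      intro F hF
      rw [mem_S] at hF
      have hb : ∀ x ∈ F, 1 ≤ x ∧ x ≤ n - 2 := by
        intro x hx
        have := hF.1 hx
        simpa [Finset.mem_Icc] using this
      have hnI : n ∉ F.image (· + 1) := by
        simp only [Finset.mem_image]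
        rintro ⟨x, hx, hxn⟩
        have := hb x hx
        omega
      rw [Finset.erase_insert hnI, Finset.image_image]
      rw [Finset.image_congr (g := id), Finset.image_id]
      intro x hx
      simp only [Function.comp_apply, id_eq]
      omega
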